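/- For every n ≥ 1, the number f(n+1) of binary rotation words of length n+1 satisfies f(n+1) ≤ f_pairs(n) + 2, where f_pairs(n) is the number of ordered pairs (u,v) of distinct binary words of length n such that u, v ∈ St(n,α) for some common slope α ∈ (0,1/2). -/

import Mathlib

open scoped Classical

/-- Membership of `x` in the circular interval `[β,γ)`: it means `β ≤ x < γ`
when `β < γ`; `x ≥ β` or `x < γ` when `γ < β`; and never holds when `β = γ`. -/
def inCirc (β γ x : ℝ) : Prop :=
  if β < γ then β ≤ x ∧ x < γ
  else if γ < β then β ≤ x ∨ x < γ
  else False

/-- The rotation word `r(α,β,γ,n)` as a list of booleans of length `n`: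
its `i`-th letter is `1` iff the fractional part `{iα}` lies in `[β,γ)`. -/
noncomputable def rotWord (α β γ : ℝ) (n : ℕ) : List Bool :=
  (List.range n).map fun i => if inCirc β γ (Int.fract (i * α)) then true else false

/-- The set `R(n)` of all rotation words of length `n`. -/
def RotWords (n : ℕ) : Set (List Bool) :=
  {w | ∃ α ∈ Set.Ico (0:ℝ) 1, ∃ β ∈ Set.Ico (0:ℝ) 1, ∃ γ ∈ Set.Ico (0:ℝ) 1,
    w = rotWord α β γ n}

/-- `numRot n = f(n)` is the number of binary rotation words of length `n`. -/
noncomputable def numRot (n : ℕ) : ℕ := (RotWords n).ncard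

/-- The set `St(n,α)` of Sturmian words of length `n` and slope `α`:
rotation words `r(α,β,{β+α},n)`, `β ∈ [0,1)`. -/
def St (n : ℕ) (α : ℝ) : Set (List Bool) :=
  {w | ∃ β ∈ Set.Ico (0:ℝ) 1, w = rotWord α β (Int.fract (β + α)) n}

/-- The set of ordered pairs `(u,v)` of distinct binary words of length `n`
such that `u, v ∈ St(n,α)` for some common slope `α ∈ (0,1/2)`. -/
def SturmianPairs (n : ℕ) : Set (List Bool × List Bool) :=
  {p | p.1 ≠ p.2 ∧ ∃ α ∈ Set.Ioo (0:ℝ) (1/2 : ℝ), p.1 ∈ St n α ∧ p.2 ∈ St n α}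

/-- `f_pairs(n)` is the number of such pairs. -/
noncomputable def fpairs (n : ℕ) : ℕ := (SturmianPairs n).ncard

lemma map_flatMap_single {α β γ : Type*} (f : β → γ) (g : α → β) (l : List α) :
    List.map f (l.flatMap fun a => [g a]) = List.map (fun i => f (g i)) l := by
  induction l with
  | nil => simp
  | cons a l ih => simp [ih]
lemma fract_self_of {y : ℝ} (h0 : 0 ≤ y) (h1 : y < 1) : Int.fract y = y :=
  Int.fract_eq_self.2 ⟨h0, h1⟩
lemma fract_of_neg {y : ℝ} (h0 : -1 ≤ y) (h1 : y < 0) : Int.fract y = y + 1 := by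
  rw [← Int.fract_add_one, fract_self_of (by linarith) (by linarith)]
lemma fract_of_ge {y : ℝ} (h0 : 1 ≤ y) (h1 : y < 2) : Int.fract y = y - 1 := by
  have h := Int.fract_add_one (y - 1)
  rw [sub_add_cancel] at h
  rw [h]; exact fract_self_of (by linarith) (by linarith)
lemma inCirc_iff {β γ x : ℝ} (hβ0 : 0 ≤ β) (hβ1 : β < 1) (hγ0 : 0 ≤ γ) (hγ1 : γ < 1)
    (hx0 : 0 ≤ x) (hx1 : x < 1) (hne : β ≠ γ) :
    inCirc β γ x ↔ Int.fract (x - β) < Int.fract (γ - β) := by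
  rcases hne.lt_or_gt with h | h
  · rw [inCirc, if_pos h, fract_self_of (y := γ - β) (by linarith) (by linarith)]
    rcases le_or_gt β x with hx | hx
    · rw [fract_self_of (y := x - β) (by linarith) (by linarith)]
      constructor
      · rintro ⟨_, h2⟩; linarith
      · intro h2; exact ⟨hx, by linarith⟩
    · rw [fract_of_neg (y := x - β) (by linarith) (by linarith)]
      constructor
      · rintro ⟨h1, _⟩; linarith
      · intro h2; linarith
  · rw [inCirc, if_neg (by linarith), if_pos h,
      fract_of_neg (y := γ - β) (by linarith) (by linarith)]
    rcases le_or_gt β x with hx | hx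
    · rw [fract_self_of (y := x - β) (by linarith) (by linarith)]
      constructor
      · intro _; linarith
      · intro _; exact Or.inl hx
    · rw [fract_of_neg (y := x - β) (by linarith) (by linarith)]
      constructor
      · rintro (h1 | h1)
        · linarith
        · linarith
      · intro h2; exact Or.inr (by linarith)
lemma star {t δ α : ℝ} (ht0 : 0 ≤ t) (ht1 : t < 1) (hδ0 : 0 < δ) (hδ1 : δ < 1)
    (hα0 : 0 < α) (hα1 : α < 1) :
    (if Int.fract (t + α) < δ then (1:ℤ) else 0)
      = (if t < δ then 1 else 0) + (if Int.fract (t + α) < α then 1 else 0)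
        - (if Int.fract (t - δ + α) < α then 1 else 0) := by
  rcases lt_or_ge (t + α) 1 with h1 | h1
  · rw [fract_self_of (y := t + α) (by linarith) h1]
    rcases lt_or_ge (t - δ + α) 0 with h2 | h2
    · rw [fract_of_neg (y := t - δ + α) (by linarith) h2]
      split_ifs <;> (try norm_num) <;> linarith
    · rw [fract_self_of (y := t - δ + α) h2 (by linarith)]
      split_ifs <;> (try norm_num) <;> linarith
  · rw [fract_of_ge (y := t + α) h1 (by linarith)]
    rcases lt_or_ge (t - δ + α) 1 with h2 | h2
    · rw [fract_self_of (y := t - δ + α) (by linarith) h2]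
      split_ifs <;> (try norm_num) <;> linarith
    · rw [fract_of_ge (y := t - δ + α) h2 (by linarith)]
      split_ifs <;> (try norm_num) <;> linarith
lemma fract_sub_left (a b : ℝ) : Int.fract (Int.fract a - b) = Int.fract (a - b) := by
  rw [show Int.fract a - b = (a - b) - ((⌊a⌋:ℤ):ℝ) by rw [Int.fract]; ring,
    Int.fract_sub_intCast]
lemma fract_sub_right (a b : ℝ) : Int.fract (a - Int.fract b) = Int.fract (a - b) := by
  rw [show a - Int.fract b = (a - b) + ((⌊b⌋:ℤ):ℝ) by rw [Int.fract]; ring,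
    Int.fract_add_intCast]
lemma fract_add_left (a b : ℝ) : Int.fract (Int.fract a + b) = Int.fract (a + b) := by
  rw [show Int.fract a + b = (a + b) - ((⌊a⌋:ℤ):ℝ) by rw [Int.fract]; ring,
    Int.fract_sub_intCast]

-- reflection lemma
lemma refl2 {p δ : ℝ} (hδ0 : 0 < δ) (hδ1 : δ < 1) :
    Int.fract (-p) < δ ↔ Int.fract (p + δ) ∈ Set.Ioc 0 δ := by
  by_cases h : Int.fract p = 0
  · have hz : Int.fract (-p) = 0 := Int.fract_neg_eq_zero.2 h
    have hp : p = ((⌊p⌋:ℤ):ℝ) := by rw [Int.fract] at h; linarith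
    have : Int.fract (p + δ) = δ := by
      rw [hp, add_comm, Int.fract_add_intCast, fract_self_of (le_of_lt hδ0) hδ1]
    simp [hz, this, Set.mem_Ioc, hδ0, le_refl]
  · have hneg : Int.fract (-p) = 1 - Int.fract p := Int.fract_neg h
    have hq0 : 0 < Int.fract p := lt_of_le_of_ne (Int.fract_nonneg p) (Ne.symm h)
    have hq1 : Int.fract p < 1 := Int.fract_lt_one p
    set q := Int.fract p with hq
    have hpq : Int.fract (p + δ) = Int.fract (q + δ) := by
      rw [hq, fract_add_left]
    rcases lt_or_ge (q + δ) 1 with h2 | h2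
    · rw [hneg, hpq, fract_self_of (by linarith) h2]
      simp only [Set.mem_Ioc]
      constructor
      · intro h3; linarith
      · rintro ⟨h3, h4⟩; linarith
    · rw [hneg, hpq, fract_of_ge (by linarith) (by linarith)]
      simp only [Set.mem_Ioc]
      constructor
      · intro h3; constructor <;> linarith
      · rintro ⟨h3, h4⟩; linarith

-- perturbation lemma
lemma perturb (δ a : ℝ) (hδ0 : 0 < δ) (hδ1 : δ < 1) (V : Finset ℝ) :
    ∃ b ∈ Set.Ico (0:ℝ) 1, ∀ y ∈ V,
      (Int.fract (y - b) < δ ↔ Int.fract (y - a) ∈ Set.Ioc 0 δ) := by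
  classical
  set T : Finset ℝ := insert (1 - δ)
    ((V.image (fun y => Int.fract (y - a))).filter (fun s => 0 < s) ∪
     (V.image (fun y => Int.fract (y - a) - δ)).filter (fun s => 0 < s)) with hT
  have hTne : T.Nonempty := ⟨1 - δ, Finset.mem_insert_self _ _⟩
  set ε := T.min' hTne with hε
  have hε0 : 0 < ε := by
    have hmem : ε ∈ T := Finset.min'_mem _ _
    rw [hT] at hmem
    rcases Finset.mem_insert.1 hmem with h | h
    · rw [h]; linarith
    · rcases Finset.mem_union.1 h with h | h <;>
        exact (Finset.mem_filter.1 h).2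
  have hε1 : ε ≤ 1 - δ :=
    Finset.min'_le _ _ (by rw [hT]; exact Finset.mem_insert_self _ _)
  refine ⟨Int.fract (a + ε), ⟨Int.fract_nonneg _, Int.fract_lt_one _⟩, ?_⟩
  intro y hy
  have hfr : Int.fract (y - Int.fract (a + ε)) = Int.fract (Int.fract (y - a) - ε) := by
    rw [fract_sub_right, fract_sub_left, show y - (a + ε) = y - a - ε by ring]
  set s := Int.fract (y - a) with hs
  have hs0 : 0 ≤ s := Int.fract_nonneg _
  have hs1 : s < 1 := Int.fract_lt_one _
  rw [hfr, Set.mem_Ioc]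
  rcases eq_or_lt_of_le hs0 with h0 | h0
  · -- s = 0
    rw [show Int.fract (s - ε) = s - ε + 1 by
      exact fract_of_neg (by linarith) (by linarith)]
    constructor
    · intro h'; linarith
    · rintro ⟨h1', h2'⟩; linarith
  · have hεs : ε ≤ s := by
      apply Finset.min'_le
      rw [hT]
      exact Finset.mem_insert_of_mem (Finset.mem_union_left _
        (Finset.mem_filter.2 ⟨Finset.mem_image.2 ⟨y, hy, rfl⟩, h0⟩))
    rcases le_or_gt s δ with h1 | h1
    · rw [fract_self_of (by linarith) (by linarith)]
      constructor
      · intro _; exact ⟨h0, h1⟩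
      · intro _; linarith
    · have hεs2 : ε ≤ s - δ := by
        apply Finset.min'_le
        rw [hT]
        exact Finset.mem_insert_of_mem (Finset.mem_union_right _
          (Finset.mem_filter.2 ⟨Finset.mem_image.2 ⟨y, hy, rfl⟩, by linarith⟩))
      rw [fract_self_of (by linarith) (by linarith)]
      constructor
      · intro h'; linarith
      · rintro ⟨_, h'⟩; linarith
lemma rotWord_eq (α β γ : ℝ) (m : ℕ) : rotWord α β γ m
    = (List.range m).map (fun i : ℕ => if inCirc β γ (Int.fract ((i:ℝ) * α)) then true else false) := by
  unfold rotWord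
  exact map_flatMap_single _ _ _
lemma fract_sub_fract_add (A B c : ℝ) :
    Int.fract (Int.fract A - Int.fract B + c) = Int.fract (A - B + c) := by
  rw [show Int.fract A - Int.fract B + c = Int.fract A + (c - Int.fract B) by ring,
    fract_add_left, show A + (c - Int.fract B) = (A + c) - Int.fract B by ring,
    fract_sub_right, show A + c - B = A - B + c by ring]
lemma getD_map_range {m k : ℕ} (g : ℕ → Bool) :
    ((List.range m).map g).getD k false = if k < m then g k else false := by
  rcases lt_or_ge k m with h | h
  · rw [List.getD_eq_getElem _ _ (by simpa using h)]
    simp [h]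
  · rw [List.getD_eq_default _ _ (by simpa using h)]
    simp [Nat.not_lt.2 h]
lemma map_range_eq_replicate {m : ℕ} {g : ℕ → Bool} {b : Bool} (h : ∀ i < m, g i = b) :
    (List.range m).map g = List.replicate m b := by
  apply List.ext_getElem (by simp)
  intro i h1 h2
  simp only [List.getElem_map, List.getElem_range, List.getElem_replicate]
  exact h i (by simpa using h1)
lemma ite_int_iff {P Q : Prop} [Decidable P] [Decidable Q]
    (h : (if P then (1:ℤ) else 0) = if Q then 1 else 0) : P ↔ Q := by
  by_cases hP : P <;> by_cases hQ : Q <;> simp [hP, hQ] at h ⊢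
noncomputable def rdiff (p : List Bool × List Bool) (k : ℕ) : ℤ :=
  (if p.1.getD k false then 1 else 0) - (if p.2.getD k false then 1 else 0)
noncomputable def rsum (p : List Bool × List Bool) (j : ℕ) : ℤ :=
  ∑ k ∈ Finset.range j, rdiff p k
noncomputable def rbase (p : List Bool × List Bool) : ℤ :=
  if h : ∃ i, rdiff p i ≠ 0 then
    (if rdiff p (Nat.find h) = 1 then - rsum p (Nat.find h) else 1 - rsum p (Nat.find h))
  else 0
noncomputable def recon (p : List Bool × List Bool) : List Bool :=
  (List.range (p.1.length + 1)).map fun j => decide (rbase p + rsum p j = 1)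
lemma main_case (n : ℕ) (α β γ : ℝ) (hα0 : 0 < α) (hα2 : α < 1/2)
    (hβ0 : 0 ≤ β) (hβ1 : β < 1) (hγ0 : 0 ≤ γ) (hγ1 : γ < 1)
    (hnc : ∀ b : Bool, rotWord α β γ (n+1) ≠ List.replicate (n+1) b) :
    rotWord α β γ (n+1) ∈ recon '' SturmianPairs n := by
  have hα1 : α < 1 := by linarith
  have hβγ : β ≠ γ := by
    intro h
    apply hnc false
    rw [rotWord_eq]
    apply map_range_eq_replicate
    intro i _
    rw [if_neg]
    rw [h, inCirc]
    simp
  set δ := Int.fract (γ - β) with hδ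
  have hδ1 : δ < 1 := Int.fract_lt_one _
  have hδ0 : 0 < δ := by
    rcases hβγ.lt_or_gt with h | h
    · rw [hδ, fract_self_of (by linarith) (by linarith)]; linarith
    · rw [hδ, fract_of_neg (by linarith) (by linarith)]; linarith
  set β' := Int.fract (β - α) with hβ'
  set γ' := Int.fract (γ - α) with hγ'
  set u := rotWord α β' (Int.fract (β' + α)) n with hu
  set v := rotWord α γ' (Int.fract (γ' + α)) n with hv
  have huSt : u ∈ St n α := ⟨β', ⟨Int.fract_nonneg _, Int.fract_lt_one _⟩, rfl⟩
  have hvSt : v ∈ St n α := ⟨γ', ⟨Int.fract_nonneg _, Int.fract_lt_one _⟩, rfl⟩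
  set t : ℕ → ℝ := fun j => Int.fract ((j:ℝ) * α - β) with ht
  have ht0 : ∀ j, 0 ≤ t j := fun j => Int.fract_nonneg _
  have ht1 : ∀ j, t j < 1 := fun j => Int.fract_lt_one _
  have hstep : ∀ j : ℕ, t (j+1) = Int.fract (t j + α) := by
    intro j
    simp only [ht]
    rw [fract_add_left, show ((j:ℝ)*α - β) + α = (((j+1:ℕ)):ℝ)*α - β by push_cast; ring]
  set W : ℕ → ℤ := fun j => if t j < δ then 1 else 0 with hW
  set U : ℕ → ℤ := fun j => if Int.fract (t j + α) < α then 1 else 0 with hU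
  set V : ℕ → ℤ := fun j => if Int.fract (t j - δ + α) < α then 1 else 0 with hV
  have hWUV : ∀ j, W (j+1) = W j + U j - V j := by
    intro j
    simp only [hW, hU, hV]
    rw [hstep j]
    exact star (ht0 j) (ht1 j) hδ0 hδ1 hα0 hα1
  have hW01 : ∀ j, W j = 0 ∨ W j = 1 := by
    intro j; simp only [hW]; split_ifs <;> simp
  have hWsum : ∀ j, W j = W 0 + ∑ k ∈ Finset.range j, (U k - V k) := by
    intro j
    induction j with
    | zero => simp
    | succ m ih => rw [Finset.sum_range_succ, hWUV m, ih]; ring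
  have hgw : ∀ i : ℕ, (if inCirc β γ (Int.fract ((i:ℝ)*α)) then true else false)
      = (if t i < δ then true else false) := by
    intro i
    refine if_congr ?_ rfl rfl
    rw [inCirc_iff hβ0 hβ1 hγ0 hγ1 (Int.fract_nonneg _) (Int.fract_lt_one _) hβγ,
      fract_sub_left]
  have hfβ' : Int.fract (Int.fract (β' + α) - β') = α := by
    rw [fract_sub_left, add_sub_cancel_left]
    exact fract_self_of (le_of_lt hα0) hα1
  have hβ'ne : β' ≠ Int.fract (β' + α) := by
    intro h
    have h2 := hfβ'
    rw [← h, sub_self, Int.fract_zero] at h2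
    linarith
  have hfγ' : Int.fract (Int.fract (γ' + α) - γ') = α := by
    rw [fract_sub_left, add_sub_cancel_left]
    exact fract_self_of (le_of_lt hα0) hα1
  have hγ'ne : γ' ≠ Int.fract (γ' + α) := by
    intro h
    have h2 := hfγ'
    rw [← h, sub_self, Int.fract_zero] at h2
    linarith
  have hgu : ∀ i : ℕ, (if inCirc β' (Int.fract (β' + α)) (Int.fract ((i:ℝ)*α)) then true else false)
      = (if Int.fract (t i + α) < α then true else false) := by
    intro i
    refine if_congr ?_ rfl rfl
    rw [inCirc_iff (Int.fract_nonneg _) (Int.fract_lt_one _) (Int.fract_nonneg _)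
      (Int.fract_lt_one _) (Int.fract_nonneg _) (Int.fract_lt_one _) hβ'ne, hfβ',
      fract_sub_left, fract_sub_right,
      show (i:ℝ)*α - (β - α) = ((i:ℝ)*α - β) + α by ring]
    simp only [ht]
    rw [fract_add_left]
  have hgv : ∀ i : ℕ, (if inCirc γ' (Int.fract (γ' + α)) (Int.fract ((i:ℝ)*α)) then true else false)
      = (if Int.fract (t i - δ + α) < α then true else false) := by
    intro i
    refine if_congr ?_ rfl rfl
    rw [inCirc_iff (Int.fract_nonneg _) (Int.fract_lt_one _) (Int.fract_nonneg _)
      (Int.fract_lt_one _) (Int.fract_nonneg _) (Int.fract_lt_one _) hγ'ne, hfγ',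
      fract_sub_left, fract_sub_right,
      show (i:ℝ)*α - (γ - α) = ((i:ℝ)*α - β) - (γ - β) + α by ring]
    simp only [ht, hδ]
    rw [fract_sub_fract_add]
  have hul : u.length = n := by rw [hu, rotWord_eq]; simp
  have hvl : v.length = n := by rw [hv, rotWord_eq]; simp
  have huD : ∀ k, u.getD k false
      = if k < n then (if Int.fract (t k + α) < α then true else false) else false := by
    intro k
    rw [hu, rotWord_eq, getD_map_range]
    exact if_congr Iff.rfl (hgu k) rfl
  have hvD : ∀ k, v.getD k false
      = if k < n then (if Int.fract (t k - δ + α) < α then true else false) else false := by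
    intro k
    rw [hv, rotWord_eq, getD_map_range]
    exact if_congr Iff.rfl (hgv k) rfl
  have hdiff : ∀ k < n, rdiff (u, v) k = U k - V k := by
    intro k hk
    simp only [rdiff, hU, hV]
    rw [huD, hvD, if_pos hk, if_pos hk]
    by_cases h1 : Int.fract (t k + α) < α <;> by_cases h2 : Int.fract (t k - δ + α) < α <;>
      simp [h1, h2]
  have hdiff0 : ∀ k, n ≤ k → rdiff (u, v) k = 0 := by
    intro k hk
    simp only [rdiff]
    rw [huD, hvD, if_neg (Nat.not_lt.2 hk), if_neg (Nat.not_lt.2 hk)]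
    simp
  have hrsum : ∀ j ≤ n, rsum (u,v) j = ∑ k ∈ Finset.range j, (U k - V k) := by
    intro j hj
    apply Finset.sum_congr rfl
    intro k hk
    exact hdiff k (lt_of_lt_of_le (Finset.mem_range.1 hk) hj)
  have hWS : ∀ j ≤ n, W j = W 0 + rsum (u,v) j := fun j hj => by
    rw [hrsum j hj, hWsum j]
  have huv : u ≠ v := by
    intro h
    apply hnc (if t 0 < δ then true else false)
    rw [rotWord_eq]
    apply map_range_eq_replicate
    intro i hi
    rw [hgw i]
    have hz : rsum (u,v) i = 0 := by
      simp [rsum, rdiff, h]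
    have h1 : W i = W 0 := by
      rw [hWS i (by omega), hz, add_zero]
    simp only [hW] at h1
    exact if_congr (ite_int_iff h1) rfl rfl
  have hex : ∃ i, rdiff (u,v) i ≠ 0 := by
    by_contra hcon
    push_neg at hcon
    apply huv
    apply List.ext_getElem (by rw [hul, hvl])
    intro i h1 h2
    have hb : u.getD i false = v.getD i false := by
      have h3 := hcon i
      simp only [rdiff] at h3
      revert h3
      cases u.getD i false <;> cases v.getD i false <;> simp
    rw [← List.getD_eq_getElem u false h1, ← List.getD_eq_getElem v false h2, hb]
  have hbase : rbase (u,v) = W 0 := by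
    rw [rbase, dif_pos hex]
    set i0 := Nat.find hex with hi0
    have hspec : rdiff (u,v) i0 ≠ 0 := Nat.find_spec hex
    have hi0n : i0 < n := by
      by_contra hcon
      exact hspec (hdiff0 i0 (Nat.le_of_not_lt hcon))
    have hWi1 : W (i0 + 1) = W i0 + rdiff (u,v) i0 := by
      rw [hWUV i0, hdiff i0 hi0n]; ring
    have hWS0 : W i0 = W 0 + rsum (u,v) i0 := hWS i0 (le_of_lt hi0n)
    have htri : rdiff (u,v) i0 = 1 ∨ rdiff (u,v) i0 = 0 ∨ rdiff (u,v) i0 = -1 := by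
      simp only [rdiff]
      cases (u,v).1.getD i0 false <;> cases (u,v).2.getD i0 false <;> simp
    by_cases hd1 : rdiff (u,v) i0 = 1
    · rw [if_pos hd1]
      rw [hd1] at hWi1
      have hWz : W i0 = 0 := by
        rcases hW01 i0 with h | h
        · exact h
        · exfalso; rcases hW01 (i0+1) with h' | h' <;> rw [h] at hWi1 <;> omega
      linarith [hWS0, hWz]
    · rw [if_neg hd1]
      have hdm1 : rdiff (u,v) i0 = -1 := by
        rcases htri with h | h | h
        · exact absurd h hd1
        · exact absurd h hspec
        · exact h
      rw [hdm1] at hWi1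
      have hWo : W i0 = 1 := by
        rcases hW01 i0 with h | h
        · exfalso; rcases hW01 (i0+1) with h' | h' <;> rw [h] at hWi1 <;> omega
        · exact h
      linarith [hWS0, hWo]
  refine ⟨(u, v), ⟨huv, α, ⟨hα0, hα2⟩, huSt, hvSt⟩, ?_⟩
  rw [recon]
  simp only
  rw [hul, rotWord_eq]
  apply List.map_congr_left
  intro j hj
  have hj' : j ≤ n := Nat.lt_succ_iff.1 (List.mem_range.1 hj)
  rw [hgw j, hbase, ← hWS j hj']
  by_cases h : t j < δ
  · have hW1 : W j = 1 := by simp [hW, h]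
    simp [h, hW1]
  · have hW0 : W j = 0 := by simp [hW, h]
    simp [h, hW0]
lemma ne_of_nonconst {n : ℕ} {α β γ : ℝ}
    (hnc : ∀ b : Bool, rotWord α β γ (n+1) ≠ List.replicate (n+1) b) : β ≠ γ := by
  intro h
  apply hnc false
  rw [rotWord_eq]
  apply map_range_eq_replicate
  intro i _
  rw [if_neg]
  rw [h, inCirc]
  simp
lemma fract_sub_pos {β γ : ℝ} (hβ0 : 0 ≤ β) (hβ1 : β < 1) (hγ0 : 0 ≤ γ) (hγ1 : γ < 1) (hne : β ≠ γ) :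
    0 < Int.fract (γ - β) := by
  rcases hne.lt_or_gt with h | h
  · rw [fract_self_of (by linarith) (by linarith)]; linarith
  · rw [fract_of_neg (by linarith) (by linarith)]; linarith
lemma rotNormalize (n : ℕ) (α β γ : ℝ) (hα0 : 0 ≤ α) (hα1 : α < 1)
    (hβ0 : 0 ≤ β) (hβ1 : β < 1) (hγ0 : 0 ≤ γ) (hγ1 : γ < 1)
    (hnc : ∀ b : Bool, rotWord α β γ (n+1) ≠ List.replicate (n+1) b) :
    ∃ α' β' γ' : ℝ, 0 < α' ∧ α' < 1/2 ∧ 0 ≤ β' ∧ β' < 1 ∧ 0 ≤ γ' ∧ γ' < 1 ∧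
      rotWord α β γ (n+1) = rotWord α' β' γ' (n+1) := by
  have hβγ : β ≠ γ := ne_of_nonconst hnc
  rcases eq_or_lt_of_le hα0 with h0 | h0
  · -- α = 0 : contradiction
    exfalso
    apply hnc (if inCirc β γ 0 then true else false)
    rw [rotWord_eq]
    apply map_range_eq_replicate
    intro i _
    have hz : (i:ℝ) * α = 0 := by rw [← h0, mul_zero]
    rw [hz, Int.fract_zero]
  rcases lt_trichotomy α (1/2) with h2 | h2 | h2
  · exact ⟨α, β, γ, h0, h2, hβ0, hβ1, hγ0, hγ1, rfl⟩
  · -- α = 1/2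
    set ε : ℝ := 1/(4*((n:ℝ)+1)) with hε
    have hn1 : (0:ℝ) < (n:ℝ) + 1 := by positivity
    have hε0 : 0 < ε := by rw [hε]; positivity
    have hεb : ((n:ℝ)+1) * ε = 1/4 := by rw [hε]; field_simp
    have hiε : ∀ i : ℕ, i ≤ n → (i:ℝ) * ε < 1/4 := by
      intro i hi
      have h3 : (i:ℝ) ≤ (n:ℝ) := by exact_mod_cast hi
      calc (i:ℝ) * ε ≤ (n:ℝ) * ε := by nlinarith
        _ < ((n:ℝ)+1) * ε := by nlinarith
        _ = 1/4 := hεb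
    have hA : ∀ i : ℕ, i ≤ n → (i = 0 ∧ Int.fract ((i:ℝ) * α) = 0 ∧ Int.fract ((i:ℝ) * (1/2 - ε)) = 0)
        ∨ (Int.fract ((i:ℝ) * α) = 0 ∧ 3/4 ≤ Int.fract ((i:ℝ) * (1/2 - ε)) ∧ Int.fract ((i:ℝ) * (1/2 - ε)) < 1)
        ∨ (Int.fract ((i:ℝ) * α) = 1/2 ∧ 1/4 < Int.fract ((i:ℝ) * (1/2 - ε)) ∧ Int.fract ((i:ℝ) * (1/2 - ε)) < 1/2) := by
      intro i hi
      have hie : (i:ℝ) * ε < 1/4 := hiε i hi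
      rcases Nat.eq_zero_or_pos i with hz | hpos
      · left
        refine ⟨hz, ?_, ?_⟩ <;> rw [hz] <;> norm_num
      rcases Nat.even_or_odd i with ⟨k, hk⟩ | ⟨k, hk⟩
      · right; left
        have hiε0 : 0 < (i:ℝ) * ε := by positivity
        have e1 : (i:ℝ) * α = ((k:ℕ):ℝ) := by rw [hk, h2]; push_cast; ring
        have e2 : (i:ℝ) * (1/2 - ε) = (-((i:ℝ)*ε)) + ((k:ℕ):ℝ) := by rw [hk]; push_cast; ring
        rw [e1, e2, Int.fract_natCast, Int.fract_add_natCast,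
          fract_of_neg (by linarith) (by linarith)]
        refine ⟨rfl, by linarith, by linarith⟩
      · right; right
        have hiε0 : 0 < (i:ℝ) * ε := by positivity
        have e1 : (i:ℝ) * α = 1/2 + ((k:ℕ):ℝ) := by rw [hk, h2]; push_cast; ring
        have e2 : (i:ℝ) * (1/2 - ε) = (1/2 - (i:ℝ)*ε) + ((k:ℕ):ℝ) := by rw [hk]; push_cast; ring
        rw [e1, e2, Int.fract_add_natCast, Int.fract_add_natCast,
          fract_self_of (by norm_num) (by norm_num),
          fract_self_of (by linarith) (by linarith)]
        refine ⟨rfl, by linarith, by linarith⟩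
    have hIC1 : ∀ x : ℝ, inCirc (3/4) (1/4) x ↔ (3/4 ≤ x ∨ x < 1/4) := by
      intro x; rw [inCirc, if_neg (by norm_num), if_pos (by norm_num)]
    have hIC2 : ∀ x : ℝ, inCirc (1/4) (1/2) x ↔ (1/4 ≤ x ∧ x < 1/2) := by
      intro x; rw [inCirc, if_pos (by norm_num)]
    have hεle : ε ≤ 1/4 := by
      rw [hε]
      have h4 : (4:ℝ) ≤ 4*((n:ℝ)+1) := by nlinarith [show (0:ℝ) ≤ (n:ℝ) from n.cast_nonneg]
      have := one_div_le_one_div_of_le (show (0:ℝ) < 4 by norm_num) h4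
      linarith
    have hα' : (0:ℝ) < 1/2 - ε ∧ 1/2 - ε < 1/2 := ⟨by linarith, by linarith⟩
    by_cases hP0 : inCirc β γ 0 <;> by_cases hPh : inCirc β γ (1/2)
    · -- both: constant true
      exfalso
      apply hnc true
      rw [rotWord_eq]
      apply map_range_eq_replicate
      intro i hi
      rcases hA i (by omega) with ⟨_, h3, _⟩ | ⟨h3, _, _⟩ | ⟨h3, _, _⟩ <;> rw [h3]
      · rw [if_pos hP0]
      · rw [if_pos hP0]
      · rw [if_pos hPh]
    · -- P0, ¬Ph : alternating 1 0 1 0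
      refine ⟨1/2 - ε, 3/4, 1/4, hα'.1, hα'.2, by norm_num, by norm_num, by norm_num, by norm_num, ?_⟩
      rw [rotWord_eq, rotWord_eq]
      apply List.map_congr_left
      intro i hi
      have hi' : i ≤ n := by
        have := List.mem_range.1 hi; omega
      refine if_congr ?_ rfl rfl
      rcases hA i hi' with ⟨_, h3, h4⟩ | ⟨h3, h4, h5⟩ | ⟨h3, h4, h5⟩
      · rw [h3, h4, hIC1]
        exact iff_of_true hP0 (Or.inr (by norm_num))
      · rw [h3, hIC1]
        exact iff_of_true hP0 (Or.inl h4)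
      · rw [h3, hIC1]
        refine iff_of_false hPh ?_
        rintro (h6 | h6) <;> linarith
    · -- ¬P0, Ph : alternating 0 1 0 1
      refine ⟨1/2 - ε, 1/4, 1/2, hα'.1, hα'.2, by norm_num, by norm_num, by norm_num, by norm_num, ?_⟩
      rw [rotWord_eq, rotWord_eq]
      apply List.map_congr_left
      intro i hi
      have hi' : i ≤ n := by
        have := List.mem_range.1 hi; omega
      refine if_congr ?_ rfl rfl
      rcases hA i hi' with ⟨_, h3, h4⟩ | ⟨h3, h4, h5⟩ | ⟨h3, h4, h5⟩
      · rw [h3, h4, hIC2]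
        refine iff_of_false hP0 ?_
        rintro ⟨h6, _⟩; linarith
      · rw [h3, hIC2]
        refine iff_of_false hP0 ?_
        rintro ⟨_, h6⟩; linarith
      · rw [h3, hIC2]
        exact iff_of_true hPh ⟨by linarith, by linarith⟩
    · -- neither: constant false
      exfalso
      apply hnc false
      rw [rotWord_eq]
      apply map_range_eq_replicate
      intro i hi
      rcases hA i (by omega) with ⟨_, h3, _⟩ | ⟨h3, _, _⟩ | ⟨h3, _, _⟩ <;> rw [h3]
      · rw [if_neg hP0]
      · rw [if_neg hP0]
      · rw [if_neg hPh]
  · -- 1/2 < α < 1 : reflection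
    set δ := Int.fract (γ - β) with hδ
    have hδ1 : δ < 1 := Int.fract_lt_one _
    have hδ0 : 0 < δ := fract_sub_pos hβ0 hβ1 hγ0 hγ1 hβγ
    set V : Finset ℝ := (Finset.range (n+1)).image (fun i : ℕ => Int.fract ((i:ℝ) * (1 - α))) with hVdef
    obtain ⟨b, ⟨hb0, hb1⟩, hP⟩ := perturb δ (-(β + δ)) hδ0 hδ1 V
    have hfb : Int.fract (Int.fract (b + δ) - b) = δ := by
      rw [fract_sub_left, add_sub_cancel_left]
      exact fract_self_of (le_of_lt hδ0) hδ1
    have hbne : b ≠ Int.fract (b + δ) := by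
      intro h
      rw [← h, sub_self, Int.fract_zero] at hfb
      linarith
    refine ⟨1 - α, b, Int.fract (b + δ), by linarith, by linarith, hb0, hb1,
      Int.fract_nonneg _, Int.fract_lt_one _, ?_⟩
    rw [rotWord_eq, rotWord_eq]
    apply List.map_congr_left
    intro i hi
    refine if_congr ?_ rfl rfl
    set y := Int.fract ((i:ℝ) * (1 - α)) with hy
    have hyV : y ∈ V := by
      rw [hVdef]
      exact Finset.mem_image.2 ⟨i, Finset.mem_range.2 (List.mem_range.1 hi), rfl⟩
    have hy0 : 0 ≤ y := Int.fract_nonneg _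
    have hy1 : y < 1 := Int.fract_lt_one _
    have key : Int.fract ((i:ℝ) * α - β) = Int.fract (-(y + β)) := by
      rw [show (i:ℝ) * α - β = (-(y + β)) + (((i:ℤ) - ⌊(i:ℝ) * (1 - α)⌋ : ℤ):ℝ) by
        rw [hy, Int.fract]; push_cast; ring]
      rw [Int.fract_add_intCast]
    have h1 : inCirc β γ (Int.fract ((i:ℝ) * α)) ↔ Int.fract (y + β + δ) ∈ Set.Ioc 0 δ := by
      rw [inCirc_iff hβ0 hβ1 hγ0 hγ1 (Int.fract_nonneg _) (Int.fract_lt_one _) hβγ,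
        fract_sub_left, ← hδ, key]
      exact refl2 hδ0 hδ1
    have h2 : inCirc b (Int.fract (b + δ)) y ↔ Int.fract (y + β + δ) ∈ Set.Ioc 0 δ := by
      rw [inCirc_iff hb0 hb1 (Int.fract_nonneg _) (Int.fract_lt_one _) hy0 hy1 hbne, hfb]
      rw [show y + β + δ = y - (-(β + δ)) by ring]
      exact hP y hyV
    exact h1.trans h2.symm

/-- For every `n ≥ 1`, `f(n+1) ≤ f_pairs(n) + 2`. -/
theorem numRot_le_fpairs (n : ℕ) (hn : 1 ≤ n) :
    numRot (n + 1) ≤ fpairs n + 2 := by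
  classical
  have hfinSt : (SturmianPairs n).Finite := by
    have h1 : SturmianPairs n ⊆
        {l : List Bool | l.length = n} ×ˢ {l : List Bool | l.length = n} := by
      rintro ⟨u, v⟩ ⟨hne, α, hα, ⟨β, hβ, hu⟩, ⟨γ, hγ, hv⟩⟩
      refine ⟨?_, ?_⟩
      · show u.length = n
        have hu' : u = rotWord α β (Int.fract (β + α)) n := hu
        rw [hu', rotWord_eq]; simp
      · show v.length = n
        have hv' : v = rotWord α γ (Int.fract (γ + α)) n := hv
        rw [hv', rotWord_eq]; simp
    exact ((List.finite_length_eq Bool n).prod (List.finite_length_eq Bool n)).subset h1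
  have hsub : RotWords (n+1) ⊆ (recon '' SturmianPairs n) ∪
      {List.replicate (n+1) false, List.replicate (n+1) true} := by
    rintro w ⟨α, ⟨hα0, hα1⟩, β, ⟨hβ0, hβ1⟩, γ, ⟨hγ0, hγ1⟩, rfl⟩
    by_cases hc : ∀ b : Bool, rotWord α β γ (n+1) ≠ List.replicate (n+1) b
    · left
      obtain ⟨α', β', γ', h1, h2, h3, h4, h5, h6, heq⟩ :=
        rotNormalize n α β γ hα0 hα1 hβ0 hβ1 hγ0 hγ1 hc
      rw [heq]
      apply main_case n α' β' γ' h1 h2 h3 h4 h5 h6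
      intro b
      rw [← heq]
      exact hc b
    · right
      push_neg at hc
      obtain ⟨b, hb⟩ := hc
      rw [hb]
      cases b
      · exact Set.mem_insert _ _
      · exact Set.mem_insert_of_mem _ rfl
  have h2 : (RotWords (n+1)).ncard ≤ ((recon '' SturmianPairs n) ∪
      {List.replicate (n+1) false, List.replicate (n+1) true}).ncard :=
    Set.ncard_le_ncard hsub ((hfinSt.image recon).union
      ((Set.finite_singleton _).insert _))
  have h3 := Set.ncard_union_le (recon '' SturmianPairs n)
    ({List.replicate (n+1) false, List.replicate (n+1) true} : Set (List Bool))
  have h4 : (recon '' SturmianPairs n).ncard ≤ (SturmianPairs n).ncard :=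
    Set.ncard_image_le hfinSt
  have h5 : ({List.replicate (n+1) false, List.replicate (n+1) true} :
      Set (List Bool)).ncard ≤ 2 := by
    apply le_trans (Set.ncard_insert_le _ _)
    simp [Set.ncard_singleton]
  calc numRot (n+1) = (RotWords (n+1)).ncard := rfl
    _ ≤ _ := h2
    _ ≤ _ := h3
    _ ≤ (SturmianPairs n).ncard + 2 := by omega
    _ = fpairs n + 2 := rfl
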